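/- Let A be a C*-algebra and ψ: C₀((0,1], A) → B a *-homomorphism into a C*-algebra B. Define φ: A → B by φ(x) = ψ(ι ⊗ x), where ι ⊗ x denotes the function t ↦ t·x in the cone C₀((0,1], A). Then φ is a completely positive contractive order zero map. -/

import Mathlib

open scoped ZeroAtInfty

section Aux

variable {A : Type*} [NonUnitalCStarAlgebra A]

/-- The function `t ↦ √t • x` as an element of `C₀((0,1], A)`. -/
noncomputable def sqFun (x : A) : C₀(Set.Ioc (0:ℝ) 1, A) where
  toFun t := Real.sqrt t.1 • x
  continuous_toFun := by fun_prop
  zero_at_infty' := by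
    rw [Metric.tendsto_nhds]
    intro ε hε
    rw [Filter.eventually_iff, Filter.mem_cocompact]
    set δ : ℝ := min ((ε / (‖x‖ + 1)) ^ 2) 1 with hδdef
    have hx1 : (0:ℝ) < ‖x‖ + 1 := by positivity
    have hδpos : 0 < δ := by
      apply lt_min
      · positivity
      · norm_num
    refine ⟨Subtype.val ⁻¹' Set.Icc δ 1, ?_, ?_⟩
    · rw [Topology.IsInducing.subtypeVal.isCompact_preimage_iff]
      · exact isCompact_Icc
      · rw [Subtype.range_val]
        intro t ht
        exact ⟨lt_of_lt_of_le hδpos ht.1, ht.2⟩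
    · intro t ht
      simp only [Set.mem_compl_iff, Set.mem_preimage, Set.mem_Icc, not_and_or, not_le] at ht
      have ht2 : t.1 < δ := by
        rcases ht with h | h
        · exact h
        · exact absurd t.2.2 (not_le.mpr h)
      have ht0 : 0 < t.1 := t.2.1
      have hsq : Real.sqrt t.1 < ε / (‖x‖ + 1) := by
        have : t.1 < (ε / (‖x‖ + 1)) ^ 2 := lt_of_lt_of_le ht2 (min_le_left _ _)
        calc Real.sqrt t.1 < Real.sqrt ((ε / (‖x‖ + 1)) ^ 2) :=
              Real.sqrt_lt_sqrt ht0.le this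
          _ = ε / (‖x‖ + 1) := by
              rw [Real.sqrt_sq (by positivity)]
      show dist _ _ < ε
      rw [dist_zero_right, norm_smul, Real.norm_of_nonneg (Real.sqrt_nonneg _)]
      calc Real.sqrt t.1 * ‖x‖ ≤ Real.sqrt t.1 * (‖x‖ + 1) := by
            apply mul_le_mul_of_nonneg_left (by linarith) (Real.sqrt_nonneg _)
        _ < ε / (‖x‖ + 1) * (‖x‖ + 1) := by
            apply mul_lt_mul_of_pos_right hsq hx1
        _ = ε := by field_simp

@[simp] lemma sqFun_apply (x : A) (t : Set.Ioc (0:ℝ) 1) :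
    sqFun x t = Real.sqrt t.1 • x := rfl

end Aux

/-- If `ψ : C₀((0,1], A) → B` is a *-homomorphism and `φ(x) = ψ(t ↦ t • x)`, then
`φ` is a completely positive contractive order zero map. Complete positivity is
encoded via matrix amplifications. -/
theorem stmt9 {A B : Type*} [NonUnitalCStarAlgebra A] [NonUnitalCStarAlgebra B]
    [PartialOrder A] [StarOrderedRing A] [PartialOrder B] [StarOrderedRing B]
    (ψ : C₀(Set.Ioc (0:ℝ) 1, A) →⋆ₙₐ[ℂ] B)
    (ι : A → C₀(Set.Ioc (0:ℝ) 1, A))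
    (hι : ∀ (x : A) (t : Set.Ioc (0:ℝ) 1), ι x t = t.val • x) :
    (∀ a b : A, 0 ≤ a → 0 ≤ b → a * b = 0 → ψ (ι a) * ψ (ι b) = 0) ∧
    (∀ a : A, ‖ψ (ι a)‖ ≤ ‖a‖) ∧
    (∀ a : A, 0 ≤ a → 0 ≤ ψ (ι a)) ∧
    (∀ (n : ℕ) (b : Matrix (Fin n) (Fin n) A),
      ∃ c : Matrix (Fin n) (Fin n) B, (star b * b).map (fun x => ψ (ι x)) = star c * c) := by
  -- key: `star (sqFun x) * sqFun y = ι (star x * y)`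
  have key : ∀ x y : A, star (sqFun x) * sqFun y = ι (star x * y) := by
    intro x y
    ext t
    rw [hι]
    rw [ZeroAtInftyContinuousMap.coe_mul, Pi.mul_apply,
      ZeroAtInftyContinuousMap.star_apply, sqFun_apply, sqFun_apply,
      star_smul, star_trivial, smul_mul_smul_comm,
      Real.mul_self_sqrt t.2.1.le]
  refine ⟨?_, ?_, ?_, ?_⟩
  · -- order zero
    intro a b _ _ hab
    have : ι a * ι b = 0 := by
      ext t
      rw [ZeroAtInftyContinuousMap.coe_mul, Pi.mul_apply, hι, hι,
        smul_mul_smul_comm, hab, smul_zero]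
      rfl
    rw [← map_mul, this, map_zero]
  · -- contractive
    intro a
    refine (NonUnitalStarAlgHom.norm_apply_le ψ (ι a)).trans ?_
    rw [← ZeroAtInftyContinuousMap.norm_toBCF_eq_norm]
    apply BoundedContinuousFunction.norm_le (norm_nonneg a) |>.mpr
    intro t
    show ‖ι a t‖ ≤ ‖a‖
    rw [hι, norm_smul, Real.norm_of_nonneg t.2.1.le]
    calc t.1 * ‖a‖ ≤ 1 * ‖a‖ :=
          mul_le_mul_of_nonneg_right t.2.2 (norm_nonneg a)
      _ = ‖a‖ := one_mul _
  · -- positive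
    intro a ha
    have h1 : ι a = star (sqFun (CFC.sqrt a)) * sqFun (CFC.sqrt a) := by
      rw [key]
      congr 1
      rw [(IsSelfAdjoint.of_nonneg (CFC.sqrt_nonneg _)).star_eq, CFC.sqrt_mul_sqrt_self a ha]
    rw [h1, map_mul, map_star]
    exact star_mul_self_nonneg _
  · -- completely positive
    intro n b
    refine ⟨Matrix.of fun i j => ψ (sqFun (b i j)), ?_⟩
    ext i j
    rw [Matrix.map_apply, Matrix.mul_apply, Matrix.mul_apply]
    simp_rw [Matrix.star_apply, Matrix.of_apply]
    have h2 : ι (∑ k, star (b k i) * b k j)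
        = ∑ k, star (sqFun (b k i)) * sqFun (b k j) := by
      simp_rw [key]
      ext t
      rw [hι]
      have : ((∑ k, ι (star (b k i) * b k j)) : C₀(Set.Ioc (0:ℝ) 1, A)) t
          = ∑ k, (ι (star (b k i) * b k j)) t := by
        induction (Finset.univ : Finset (Fin n)) using Finset.induction with
        | empty => simp
        | insert _ _ hk ih =>
            rw [Finset.sum_insert hk, Finset.sum_insert hk, ← ih,
              ZeroAtInftyContinuousMap.coe_add, Pi.add_apply]
      rw [this, Finset.smul_sum]
      congr 1
      ext k
      rw [hι]
    rw [h2, map_sum]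
    congr 1
    ext k
    rw [← map_star, ← map_mul]
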